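/- Let R be a commutative Noetherian ring and let M be a finitely generated R-submodule of the total ring of fractions Q(R) containing the image of a non-zero-divisor of R. Then the trace ideal Tr_R(M) equals the intersection, taken over all integers i ≥ 1 and all (not necessarily finitely generated) R-modules N, of the annihilators ann_R Ext^i_R(M, N). -/

import Mathlib

open CategoryTheory CategoryTheory.Limits Opposite

universe u

/-- The trace ideal of an `R`-module `M`: the ideal of `R` generated by the images of all
`R`-linear maps `M → R`. -/
noncomputable def traceIdeal (R : Type u) [CommRing R] (M : Type u)
    [AddCommGroup M] [Module R M] : Ideal R :=
  ⨆ f : M →ₗ[R] R, LinearMap.range f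

section KeySwap

variable {R : Type u} [CommRing R]

/-- Key swap lemma: for any linear map `f` from a submodule `M` of `Q(R)` to `Q(R)` and
`a b ∈ M`, we have `f a * b = f b * a`. -/
theorem key_swap (M : Submodule R (Localization (nonZeroDivisors R)))
    (f : ↥M →ₗ[R] Localization (nonZeroDivisors R)) (a b : ↥M) :
    f a * (b : Localization (nonZeroDivisors R)) = f b * (a : Localization (nonZeroDivisors R)) := by
  obtain ⟨⟨x, s⟩, hx⟩ := IsLocalization.surj (nonZeroDivisors R)
    (a : Localization (nonZeroDivisors R))
  obtain ⟨⟨y, t⟩, hy⟩ := IsLocalization.surj (nonZeroDivisors R)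
    (b : Localization (nonZeroDivisors R))
  have hsa : ((s.1 • a : ↥M) : Localization (nonZeroDivisors R)) = algebraMap R _ x := by
    simp only [Submodule.coe_smul, Algebra.smul_def]
    rw [mul_comm]; exact hx
  have htb : ((t.1 • b : ↥M) : Localization (nonZeroDivisors R)) = algebraMap R _ y := by
    simp only [Submodule.coe_smul, Algebra.smul_def]
    rw [mul_comm]; exact hy
  have key : f (s.1 • a) * ((t.1 • b : ↥M) : Localization (nonZeroDivisors R))
      = f (t.1 • b) * ((s.1 • a : ↥M) : Localization (nonZeroDivisors R)) := by
    have h1 : (y • (s.1 • a) : ↥M) = (x • (t.1 • b) : ↥M) := by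
      apply Subtype.ext
      simp only [Submodule.coe_smul, Algebra.smul_def, hsa, htb]
      ring
    have h2 : y • f (s.1 • a) = x • f (t.1 • b) := by
      rw [← map_smul f y, ← map_smul f x, h1]
    calc f (s.1 • a) * ((t.1 • b : ↥M) : Localization (nonZeroDivisors R))
        = f (s.1 • a) * algebraMap R _ y := by rw [htb]
    _ = y • f (s.1 • a) := by rw [Algebra.smul_def, mul_comm]
    _ = x • f (t.1 • b) := h2
    _ = algebraMap R _ x * f (t.1 • b) := by rw [Algebra.smul_def]
    _ = f (t.1 • b) * ((s.1 • a : ↥M) : Localization (nonZeroDivisors R)) := by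
        rw [hsa, mul_comm]
  have hu : IsUnit (algebraMap R (Localization (nonZeroDivisors R)) (s.1 * t.1)) :=
    IsLocalization.map_units _ (s * t)
  apply hu.mul_left_cancel
  rw [map_smul, map_smul] at key
  simp only [Submodule.coe_smul, Algebra.smul_def] at key
  rw [map_mul]
  calc algebraMap R _ s.1 * algebraMap R _ t.1 * (f a * ↑b)
      = (algebraMap R _ s.1 * f a) * (algebraMap R _ t.1 * ↑b) := by ring
  _ = (algebraMap R _ t.1 * f b) * (algebraMap R _ s.1 * ↑a) := by rw [key]
  _ = algebraMap R _ s.1 * algebraMap R _ t.1 * (f b * ↑a) := by ring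

end KeySwap

section Homological

variable {R : Type u} [CommRing R]

/-- The chain map `r • 𝟙` on a projective resolution. -/
private noncomputable def resAlpha (X : ModuleCat.{u} R) (P : ProjectiveResolution X) (r : R) :
    P.complex ⟶ P.complex where
  f _ := r • 𝟙 _
  comm' := by intros; simp

/-- The chain map which is `P.π.f 0 ≫ φ₀` in degree `0` and `0` elsewhere. -/
private noncomputable def resBeta (X : ModuleCat.{u} R) (P : ProjectiveResolution X) (r : R)
    (φ₀ : X ⟶ P.complex.X 0) : P.complex ⟶ P.complex where
  f i := match i with
    | 0 => P.π.f 0 ≫ φ₀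
    | _+1 => 0
  comm' := by
    rintro i j hij
    obtain rfl : j + 1 = i := hij
    match j with
    | 0 => simp; erw [← Category.assoc, P.complex_d_comp_π_f_zero, zero_comp]
    | k+1 => simp

private lemma res_smul_eq (X : ModuleCat.{u} R) (P : ProjectiveResolution X) (r : R)
    (φ₀ : X ⟶ P.complex.X 0) (hφ₀ : φ₀ ≫ P.π.f 0 = r • 𝟙 X) (j : ℕ) :
    ∃ (η : P.complex.X j ⟶ P.complex.X (j+1)) (ζ : P.complex.X (j+1) ⟶ P.complex.X (j+2)),
      r • 𝟙 (P.complex.X (j+1)) =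
        P.complex.d (j+1) j ≫ η + ζ ≫ P.complex.d (j+2) (j+1) := by
  have hα : resAlpha X P r ≫ P.π
      = P.π ≫ (ChainComplex.single₀ (ModuleCat.{u} R)).map (r • 𝟙 X) := by
    apply HomologicalComplex.hom_ext
    intro n
    match n with
    | 0 =>
      simp [resAlpha]
      erw [Linear.smul_comp, Linear.comp_smul, Category.id_comp]
    | k+1 => simp [resAlpha]
  have hβ : resBeta X P r φ₀ ≫ P.π
      = P.π ≫ (ChainComplex.single₀ (ModuleCat.{u} R)).map (r • 𝟙 X) := by
    apply HomologicalComplex.hom_ext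
    intro n
    match n with
    | 0 =>
      show (P.π.f 0 ≫ φ₀) ≫ P.π.f 0 = _
      erw [Category.assoc, hφ₀]
      simp
    | k+1 => show (0 : _ ⟶ _) ≫ _ = _; simp
  let h := ProjectiveResolution.liftHomotopy (r • 𝟙 X) _ _ hα hβ
  refine ⟨h.hom j (j+1), h.hom (j+1) (j+2), ?_⟩
  have hcomm := h.comm (j+1)
  rw [Homotopy.dNext_succ_chainComplex, Homotopy.prevD_chainComplex] at hcomm
  have hβ0 : (resBeta X P r φ₀).f (j+1) = 0 := rfl
  have hα0 : (resAlpha X P r).f (j+1) = r • 𝟙 _ := rfl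
  rw [hα0, hβ0, add_zero] at hcomm
  exact hcomm

/-- If `r • 𝟙 X` factors through the free module `R`, then `r` annihilates
`Ext^{j+1}(X, N)` for every `N`. -/
private lemma mem_ann_ext_of_factor (X : ModuleCat.{u} R) (r : R)
    (f : X →ₗ[R] R) (g : R →ₗ[R] X) (hfg : ∀ x : X, g (f x) = r • x)
    (j : ℕ) (N : ModuleCat.{u} R)
    (x : ((Ext R (ModuleCat.{u} R) (j+1)).obj (op X)).obj N) : r • x = 0 := by
  obtain ⟨P⟩ : Nonempty (ProjectiveResolution X) := ⟨ProjectiveResolution.of X⟩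
  obtain ⟨p₀, hp₀⟩ := (ModuleCat.epi_iff_surjective (P.π.f 0)).mp inferInstance (g 1)
  let φ₀ : X ⟶ P.complex.X 0 := ModuleCat.ofHom (LinearMap.smulRight f p₀)
  have hφ₀ : φ₀ ≫ P.π.f 0 = r • 𝟙 X := by
    ext x'
    show (P.π.f 0).hom (f x' • p₀) = (r • 𝟙 X).hom x'
    rw [map_smul]
    erw [hp₀]
    erw [← map_smul g, smul_eq_mul, mul_one, hfg]
    rfl
  let K := P.complex.linearYonedaObj R N
  let S := K.sc' j (j+1) (j+2)
  let e : ((Ext R (ModuleCat.{u} R) (j+1)).obj (op X)).obj N ≅ S.moduleCatLeftHomologyData.H :=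
    P.isoExt (j+1) N ≪≫ K.homologyIsoSc' j (j+1) (j+2) (by simp) (by simp) ≪≫
      S.moduleCatHomologyIso
  let E := e.toLinearEquiv
  rw [← E.map_eq_zero_iff, map_smul]
  obtain ⟨z, hz⟩ := Submodule.Quotient.mk_surjective (LinearMap.range S.moduleCatToCycles) (E x)
  rw [← hz]; erw [← Submodule.Quotient.mk_smul, Submodule.Quotient.mk_eq_zero]
  obtain ⟨η, ζ, hηζ⟩ := res_smul_eq X P r φ₀ hφ₀ j
  have hcoc : P.complex.d (j+2) (j+1) ≫ (z.1 : P.complex.X (j+1) ⟶ N) = 0 := z.2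
  refine ⟨η ≫ (z.1 : P.complex.X (j+1) ⟶ N), Subtype.ext ?_⟩
  show P.complex.d (j+1) j ≫ (η ≫ (z.1 : P.complex.X (j+1) ⟶ N)) = r • z.1
  calc P.complex.d (j+1) j ≫ (η ≫ (z.1 : P.complex.X (j+1) ⟶ N))
      = (P.complex.d (j+1) j ≫ η) ≫ (z.1 : P.complex.X (j+1) ⟶ N) := by
        erw [Category.assoc]
  _ = (r • 𝟙 (P.complex.X (j+1)) - ζ ≫ P.complex.d (j+2) (j+1)) ≫
        (z.1 : P.complex.X (j+1) ⟶ N) := by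
        congr 1
        rw [hηζ]; abel
  _ = r • (show P.complex.X (j+1) ⟶ N from z.1) := by
        erw [Preadditive.sub_comp, Category.assoc, hcoc, comp_zero, sub_zero,
          Linear.smul_comp, Category.id_comp]

/-- If `r` annihilates `Ext^1(X, N)` for every `N`, then `r • 𝟙 X` factors through a
projective module. -/
private lemma factor_of_ann_ext (X : ModuleCat.{u} R) (r : R)
    (hr : ∀ (N : ModuleCat.{u} R)
      (y : ((Ext R (ModuleCat.{u} R) 1).obj (op X)).obj N), r • y = 0) :
    ∃ (P₀ : ModuleCat.{u} R) (_ : Projective P₀) (u : X ⟶ P₀) (v : P₀ ⟶ X),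
      ∀ x : X, v (u x) = r • x := by
  obtain ⟨P⟩ : Nonempty (ProjectiveResolution X) := ⟨ProjectiveResolution.of X⟩
  let π₀ : P.complex.X 0 ⟶ X := P.π.f 0
  let N : ModuleCat.{u} R := ModuleCat.of R (LinearMap.ker π₀.hom)
  have hd10 : ∀ p : P.complex.X 1, π₀ (P.complex.d 1 0 p) = 0 := by
    intro p
    have := P.complex_d_comp_π_f_zero
    calc π₀ (P.complex.d 1 0 p) = (P.complex.d 1 0 ≫ π₀) p := rfl
    _ = (0 : P.complex.X 1 ⟶ X) p := by exact congrArg (fun φ : P.complex.X 1 ⟶ X => φ p) this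
    _ = 0 := rfl
  let ξ : P.complex.X 1 ⟶ N :=
    ModuleCat.ofHom (LinearMap.codRestrict _ (P.complex.d 1 0).hom hd10)
  let K := P.complex.linearYonedaObj R N
  let S := K.sc' 0 1 2
  have hξmem : ξ ∈ LinearMap.ker S.g.hom := by
    show P.complex.d 2 1 ≫ ξ = 0
    ext p
    show P.complex.d 1 0 (P.complex.d 2 1 p) = (0 : ↥(LinearMap.ker π₀.hom)).1
    calc P.complex.d 1 0 (P.complex.d 2 1 p) = (P.complex.d 2 1 ≫ P.complex.d 1 0) p := rfl
    _ = (0 : P.complex.X 2 ⟶ P.complex.X 0) p := by rw [HomologicalComplex.d_comp_d]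
    _ = 0 := rfl
  let e : ((Ext R (ModuleCat.{u} R) 1).obj (op X)).obj N ≅ S.moduleCatLeftHomologyData.H :=
    P.isoExt 1 N ≪≫ K.homologyIsoSc' 0 1 2 (by simp) (by simp) ≪≫ S.moduleCatHomologyIso
  let E := e.toLinearEquiv
  have h0 : r • (Submodule.Quotient.mk ⟨ξ, hξmem⟩ : ↥S.moduleCatLeftHomologyData.H) = 0 := by
    have : (Submodule.Quotient.mk ⟨ξ, hξmem⟩ : ↥S.moduleCatLeftHomologyData.H)
        = E (E.symm (Submodule.Quotient.mk ⟨ξ, hξmem⟩)) := (E.apply_symm_apply _).symm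
    rw [this]; erw [← E.map_smul, hr N, map_zero]; rfl
  rw [← Submodule.Quotient.mk_smul, Submodule.Quotient.mk_eq_zero] at h0
  obtain ⟨ψ, hψ⟩ := h0
  let ψ' : P.complex.X 0 ⟶ N := ψ
  have hψ' : P.complex.d 1 0 ≫ ψ' = r • ξ := by
    have := congrArg Subtype.val hψ
    exact this
  let ι : N ⟶ P.complex.X 0 :=
    ModuleCat.ofHom (Submodule.subtype (LinearMap.ker π₀.hom))
  have hξι : ξ ≫ ι = P.complex.d 1 0 := rfl
  let θ : P.complex.X 0 ⟶ P.complex.X 0 := r • 𝟙 _ - ψ' ≫ ι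
  have hθ : P.complex.d 1 0 ≫ θ = 0 := by
    have h2 : P.complex.d 1 0 ≫ θ
        = r • (P.complex.d 1 0) - (P.complex.d 1 0 ≫ ψ') ≫ ι := by
      simp only [θ, Preadditive.comp_sub, Linear.comp_smul, Category.comp_id, Category.assoc]
    rw [h2, hψ', Linear.smul_comp, hξι, sub_self]
  obtain ⟨τ, hτ⟩ := CokernelCofork.IsColimit.desc' P.isColimitCokernelCofork θ hθ
  have hτ : π₀ ≫ τ = θ := hτ
  have hτπ : τ ≫ π₀ = r • 𝟙 X := by
    have : Epi π₀ := show Epi (P.π.f 0) from inferInstance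
    refine (cancel_epi π₀).1 ?_
    erw [← Category.assoc, hτ]
    show θ ≫ π₀ = π₀ ≫ (r • 𝟙 X)
    have hιπ : ι ≫ π₀ = 0 := by
      ext q
      exact q.2
    rw [Preadditive.sub_comp, Category.assoc, hιπ, comp_zero, sub_zero, Linear.smul_comp,
      Category.id_comp, Linear.comp_smul, Category.comp_id]
  refine ⟨P.complex.X 0, P.projective 0, τ, π₀, fun x => ?_⟩
  calc π₀ (τ x) = (τ ≫ π₀) x := rfl
  _ = r • x := by rw [hτπ]; rfl

end Homological

theorem trace_eq_iInf_ann_ext (R : Type u) [CommRing R] [IsNoetherianRing R]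
    (M : Submodule R (Localization (nonZeroDivisors R)))
    (hfg : M.FG)
    (hreg : ∃ r ∈ nonZeroDivisors R,
      algebraMap R (Localization (nonZeroDivisors R)) r ∈ M) :
    traceIdeal R ↥M =
      ⨅ (i : ℕ) (_ : 1 ≤ i) (N : ModuleCat.{u} R),
        Module.annihilator R
          (((Ext R (ModuleCat.{u} R) i).obj (op (ModuleCat.of R ↥M))).obj N) := by
  obtain ⟨r₀, hr₀, hr₀M⟩ := hreg
  set Q := Localization (nonZeroDivisors R)
  set c : ↥M := ⟨algebraMap R Q r₀, hr₀M⟩ with hc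
  have hcunit : IsUnit (c : Q) := IsLocalization.map_units Q ⟨r₀, hr₀⟩
  have halg : Function.Injective (algebraMap R Q) :=
    IsLocalization.injective Q (le_refl (nonZeroDivisors R))
  apply le_antisymm
  · -- trace ⊆ ⋂ ann Ext
    refine iSup_le fun f => ?_
    rintro r ⟨a, rfl⟩
    refine (Submodule.mem_iInf _).mpr fun i => (Submodule.mem_iInf _).mpr fun hi =>
      (Submodule.mem_iInf _).mpr fun N => ?_
    obtain ⟨j, rfl⟩ := Nat.exists_eq_add_of_le' hi
    rw [Module.mem_annihilator]
    intro x
    have hfg' : ∀ m : ↥M, (LinearMap.toSpanSingleton R ↥M a) (f m) = f a • m := by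
      intro m
      show f m • a = f a • m
      apply Subtype.ext
      have hks := key_swap M ((Algebra.linearMap R Q).comp f) m a
      simp only [LinearMap.coe_comp, Function.comp_apply, Algebra.linearMap_apply] at hks
      show f m • (a : Q) = f a • (m : Q)
      rw [Algebra.smul_def, Algebra.smul_def, hks]
    exact mem_ann_ext_of_factor (ModuleCat.of R ↥M) (f a) f
      (LinearMap.toSpanSingleton R ↥M a) hfg' j N x
  · -- ⋂ ann Ext ⊆ trace
    intro r hr
    have hr1 : ∀ (N : ModuleCat.{u} R)
        (y : ((Ext R (ModuleCat.{u} R) 1).obj (op (ModuleCat.of R ↥M))).obj N), r • y = 0 := by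
      intro N y
      have := (Submodule.mem_iInf _).mp ((Submodule.mem_iInf _).mp
        ((Submodule.mem_iInf _).mp hr 1) le_rfl) N
      exact Module.mem_annihilator.mp this y
    obtain ⟨P₀, hproj, u, v, huv⟩ := factor_of_ann_ext (ModuleCat.of R ↥M) r hr1
    have hprojmod : Module.Projective R ↑P₀ := by
      rw [IsProjective.iff_projective (R := R) (P := ↑P₀)]
      rw [ModuleCat.of_coe]
      exact hproj
    obtain ⟨s, hs⟩ := Module.projective_def'.mp hprojmod
    -- coordinate functionals
    let w : ↑P₀ → (↥M →ₗ[R] R) := fun p =>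
      (Finsupp.lapply p).comp (s.comp (u.hom))
    have hsum : ∀ m : ↥M, r • m = (s (u m)).sum fun p cp => cp • v.hom p := by
      intro m
      have h2 : Finsupp.linearCombination R id (s (u m)) = u m := LinearMap.congr_fun hs (u m)
      calc r • m = v (u m) := (huv m).symm
      _ = v (Finsupp.linearCombination R id (s (u m))) := by rw [h2]
      _ = (s (u m)).sum fun p cp => cp • v.hom p := by
          rw [Finsupp.linearCombination_apply, map_finsuppSum]
          refine Finsupp.sum_congr fun p _ => ?_
          rw [map_smul]
          rfl
    -- evaluate at the regular element c and pass to Q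
    have hQ : algebraMap R Q r * (c : Q)
        = algebraMap R Q ((s (u c)).support.sum fun p => (w p) (v.hom p)) * (c : Q) := by
      have h3 := congrArg (fun m : ↥M => (m : Q)) (hsum c)
      simp only [Submodule.coe_smul, Algebra.smul_def] at h3
      rw [h3]
      rw [Finsupp.sum]
      rw [AddSubmonoidClass.coe_finset_sum]
      rw [map_sum, Finset.sum_mul]
      refine Finset.sum_congr rfl fun p _ => ?_
      have hkey := key_swap M ((Algebra.linearMap R Q).comp (w p)) c
        (v.hom p)
      simp only [LinearMap.coe_comp, Function.comp_apply, Algebra.linearMap_apply] at hkey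
      have hwp : (w p) c = (s (u c)) p := rfl
      rw [Submodule.coe_smul, Algebra.smul_def, ← hwp, hkey]
    have hrr : r = (s (u c)).support.sum fun p => (w p) (v.hom p) := by
      apply halg
      apply hcunit.mul_left_cancel
      rw [mul_comm ((c : Q)) _, mul_comm ((c : Q)) _]
      exact hQ
    rw [hrr]
    refine Submodule.sum_mem _ fun p _ => ?_
    have : LinearMap.range (w p) ≤ traceIdeal R ↥M :=
      le_iSup (fun f : ↥M →ₗ[R] R => LinearMap.range f) (w p)
    exact this ⟨_, rfl⟩
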